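/- Let r, s, n be positive integers, let X = (X^1,...,X^r) be a nonzero vector in (Z_r ∪ {0})^n, and let σ be a permutation of [n]. For each j ∈ [r], let Y^{1j},...,Y^{sj} be pairwise disjoint subsets of X^j, let Y_j = (Y^{1j},...,Y^{sj}) be the corresponding vector in (Z_s ∪ {0})^n, and let Z = (Y^{11},...,Y^{s1},...,Y^{1r},...,Y^{sr}) be the corresponding vector in (Z_{rs} ∪ {0})^n. Then alt_σ(Z) ≥ Σ_{j=1}^r alt_{σ|_{X^j}}(Y_j), where alt_{σ|_{X^j}}(Y_j) is the alternation of Y_j computed along the positions of X^j taken in the order induced by σ. -/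

import Mathlib

open Finset

/-- `l` is (the index list of) an alternating subsequence of
`(X (σ 1), ..., X (σ n))`: indices are increasing, all chosen entries are nonzero
(`≠ none`), and any two consecutive chosen entries differ. -/
def IsAltList {α : Type*} (n : ℕ) (σ : Equiv.Perm (Fin n))
    (X : Fin n → Option α) (l : List (Fin n)) : Prop :=
  l.Chain' (· < ·) ∧ (∀ i ∈ l, X (σ i) ≠ none) ∧
    l.Chain' (fun i j => X (σ i) ≠ X (σ j))

/-- `alt_σ(X)`: maximum length of an alternating subsequence of nonzero entries of
`(X (σ 1), ..., X (σ n))`. -/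
noncomputable def altVec {α : Type*} (n : ℕ) (σ : Equiv.Perm (Fin n))
    (X : Fin n → Option α) : ℕ :=
  sSup {k | ∃ l : List (Fin n), IsAltList n σ X l ∧ l.length = k}

open Classical in
/-- The signed vector (with symbol set `ι`) encoded by a tuple `S` of (pairwise disjoint)
subsets of `[n]`: position `a` carries the symbol `j` with `a ∈ S j`, and `0` (i.e. `none`)
if `a` lies in no `S j`. -/
noncomputable def vecOfTuple {ι : Type*} (n : ℕ) (S : ι → Finset (Fin n)) :
    Fin n → Option ι := fun a =>
  if h : ∃ j, a ∈ S j then some h.choose else none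

lemma IsAltList.sorted' {α : Type*} {n : ℕ} {σ : Equiv.Perm (Fin n)}
    {X : Fin n → Option α} {l : List (Fin n)} (h : IsAltList n σ X l) :
    l.Pairwise (· < ·) :=
  List.isChain_iff_pairwise.mp h.1

lemma IsAltList.nodup {α : Type*} {n : ℕ} {σ : Equiv.Perm (Fin n)}
    {X : Fin n → Option α} {l : List (Fin n)} (h : IsAltList n σ X l) :
    l.Nodup :=
  h.sorted'.imp ne_of_lt

lemma altVec_bddAbove {α : Type*} (n : ℕ) (σ : Equiv.Perm (Fin n))
    (X : Fin n → Option α) :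
    BddAbove {k | ∃ l : List (Fin n), IsAltList n σ X l ∧ l.length = k} := by
  refine ⟨n, ?_⟩
  rintro k ⟨l, hl, rfl⟩
  simpa using hl.nodup.length_le_card

lemma altVec_spec {α : Type*} (n : ℕ) (σ : Equiv.Perm (Fin n))
    (X : Fin n → Option α) :
    ∃ l : List (Fin n), IsAltList n σ X l ∧ l.length = altVec n σ X := by
  refine Nat.sSup_mem ?_ (altVec_bddAbove n σ X)
  exact ⟨0, [], ⟨List.isChain_nil, by simp, List.isChain_nil⟩, rfl⟩

lemma le_altVec {α : Type*} {n : ℕ} {σ : Equiv.Perm (Fin n)}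
    {X : Fin n → Option α} {l : List (Fin n)} (h : IsAltList n σ X l) :
    l.length ≤ altVec n σ X :=
  le_csSup (altVec_bddAbove n σ X) ⟨l, h, rfl⟩

lemma vecOfTuple_eq_some {ι : Type*} {n : ℕ} {S : ι → Finset (Fin n)}
    (hdisj : ∀ j j', j ≠ j' → Disjoint (S j) (S j')) {a : Fin n} {j : ι}
    (ha : a ∈ S j) : vecOfTuple n S a = some j := by
  unfold vecOfTuple
  have h : ∃ j, a ∈ S j := ⟨j, ha⟩
  rw [dif_pos h]
  congr 1
  by_contra hne
  exact Finset.disjoint_left.mp (hdisj _ _ hne) h.choose_spec ha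

lemma vecOfTuple_ne_none {ι : Type*} {n : ℕ} {S : ι → Finset (Fin n)} {a : Fin n} :
    vecOfTuple n S a ≠ none ↔ ∃ j, a ∈ S j := by
  unfold vecOfTuple
  by_cases h : ∃ j, a ∈ S j
  · rw [dif_pos h]; simpa using h
  · rw [dif_neg h]; simpa using h

/-- In a strictly sorted list carrying a `Chain'` relation, two members with
nothing of the list strictly between them are related. -/
lemma rel_of_sorted_chain' {α : Type*} [LinearOrder α] {R : α → α → Prop} (l : List α) :
    l.Pairwise (· < ·) → l.Chain' R → ∀ x y : α, x ∈ l → y ∈ l →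
      x < y → (∀ z ∈ l, x < z → y ≤ z) → R x y := by
  induction l with
  | nil => intro _ _ x y hx; simp at hx
  | cons a t ih =>
    intro hs hR x y hx hy hxy hbet
    rw [List.pairwise_cons] at hs
    rcases List.mem_cons.mp hx with rfl | hxt
    · have hyt : y ∈ t := by
        rcases List.mem_cons.mp hy with rfl | h
        · exact absurd hxy (lt_irrefl _)
        · exact h
      cases t with
      | nil => simp at hyt
      | cons b t' =>
        have hab : R x b := (List.isChain_cons_cons.mp hR).1
        have hby : b ≤ y := by
          rcases List.mem_cons.mp hyt with rfl | h
          · exact le_refl _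
          · exact ((List.pairwise_cons.mp hs.2).1 y h).le
        have hyb : y = b := le_antisymm (hbet b (by simp) (hs.1 b (by simp))) hby
        exact hyb ▸ hab
    · have hyt : y ∈ t := by
        rcases List.mem_cons.mp hy with rfl | h
        · exact absurd hxy (not_lt.mpr (hs.1 x hxt).le)
        · exact h
      exact ih hs.2 hR.tail x y hxt hyt hxy
        (fun z hz hxz => hbet z (List.mem_cons_of_mem a hz) hxz)

set_option maxHeartbeats 1000000 in
theorem stmt2 (n r s : ℕ) (hr : 1 ≤ r) (hs : 1 ≤ s) (σ : Equiv.Perm (Fin n))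
    (X : Fin r → Finset (Fin n))
    (hXdisj : ∀ j j', j ≠ j' → Disjoint (X j) (X j'))
    (hX0 : ∃ j, (X j).Nonempty)
    (Y : Fin r → Fin s → Finset (Fin n))
    (hY : ∀ j i, Y j i ⊆ X j)
    (hYdisj : ∀ j, ∀ i i', i ≠ i' → Disjoint (Y j i) (Y j i')) :
    ∑ j : Fin r, altVec n σ (vecOfTuple n fun i => Y j i)
      ≤ altVec n σ (vecOfTuple n fun q : Fin r × Fin s => Y q.1 q.2) := by
  classical
  -- disjointness of the full family
  have hfull : ∀ q q' : Fin r × Fin s, q ≠ q' →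
      Disjoint (Y q.1 q.2) (Y q'.1 q'.2) := by
    rintro ⟨j, i⟩ ⟨j', i'⟩ hne
    by_cases hj : j = j'
    · subst hj
      have hii : i ≠ i' := by
        intro h; exact hne (by simp [h])
      exact hYdisj j i i' hii
    · exact (hXdisj j j' hj).mono (hY j i) (hY j' i')
  -- witnesses for each j
  choose l hl hlen using fun j => altVec_spec n σ (vecOfTuple n (fun i => Y j i))
  have hmem : ∀ j, ∀ x ∈ l j, ∃ i, σ x ∈ Y j i := fun j x hx =>
    vecOfTuple_ne_none.mp ((hl j).2.1 x hx)
  have hdisjl : ∀ j j', j ≠ j' → Disjoint ((l j).toFinset) ((l j').toFinset) := by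
    intro j j' hne
    rw [Finset.disjoint_left]
    intro x hx hx'
    obtain ⟨i, hi⟩ := hmem j x (List.mem_toFinset.mp hx)
    obtain ⟨i', hi'⟩ := hmem j' x (List.mem_toFinset.mp hx')
    exact Finset.disjoint_left.mp (hXdisj j j' hne) (hY j i hi) (hY j' i' hi')
  set S : Finset (Fin n) := Finset.univ.biUnion (fun j => (l j).toFinset) with hS
  set L : List (Fin n) := S.sort (· ≤ ·) with hLdef
  have hLmem : ∀ x, x ∈ L ↔ ∃ j, x ∈ l j := by
    intro x
    simp [hLdef, hS, Finset.mem_sort, List.mem_toFinset]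
  have hLsorted : L.Pairwise (· < ·) := (Finset.sortedLT_sort S).pairwise
  have hLlen : L.length = ∑ j, (l j).length := by
    rw [hLdef, Finset.length_sort, hS,
      Finset.card_biUnion (fun x _ y _ h => hdisjl x y h)]
    exact Finset.sum_congr rfl fun j _ =>
      List.toFinset_card_of_nodup (hl j).nodup
  -- L is an alternating list for the combined vector
  have hZsome : ∀ j i, ∀ a ∈ Y j i,
      vecOfTuple n (fun q : Fin r × Fin s => Y q.1 q.2) a = some (j, i) :=
    fun j i a ha => vecOfTuple_eq_some hfull (j := (j, i)) ha
  have hVsome : ∀ j i, ∀ a ∈ Y j i,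
      vecOfTuple n (fun i => Y j i) a = some i :=
    fun j i a ha => vecOfTuple_eq_some (hYdisj j) ha
  have hLalt : IsAltList n σ (vecOfTuple n fun q : Fin r × Fin s => Y q.1 q.2) L := by
    refine ⟨List.isChain_iff_pairwise.mpr hLsorted, ?_, ?_⟩
    · intro x hx
      obtain ⟨j, hj⟩ := (hLmem x).mp hx
      obtain ⟨i, hi⟩ := hmem j x hj
      rw [hZsome j i _ hi]
      simp
    · show List.IsChain _ L
      rw [List.isChain_iff_getElem]
      intro k hk
      show (vecOfTuple n fun q : Fin r × Fin s => Y q.1 q.2) (σ (L.get ⟨k, by omega⟩)) ≠ (vecOfTuple n fun q : Fin r × Fin s => Y q.1 q.2) (σ (L.get ⟨k + 1, hk⟩))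
      set x := L.get ⟨k, by omega⟩ with hx
      set y := L.get ⟨k + 1, by omega⟩ with hy
      have hxy : x < y := hLsorted.sortedLT.strictMono_get (by simp)
      -- any element of L above x is at least y
      have hbetween : ∀ z ∈ L, x < z → y ≤ z := by
        intro z hz hxz
        obtain ⟨m, rfl⟩ := List.mem_iff_get.mp hz
        have hkm : k < (m : ℕ) := by
          by_contra hc
          push_neg at hc
          have hmle : m ≤ (⟨k, by omega⟩ : Fin L.length) := by
            rw [Fin.le_def]; simpa using hc
          exact absurd (hLsorted.sortedLT.strictMono_get.monotone hmle) (not_le.mpr hxz)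
        have hle : (⟨k + 1, by omega⟩ : Fin L.length) ≤ m := by
          rw [Fin.le_def]; simpa using hkm
        exact hLsorted.sortedLT.strictMono_get.monotone hle
      obtain ⟨j, hj⟩ := (hLmem x).mp (List.get_mem L _)
      obtain ⟨j', hj'⟩ := (hLmem y).mp (List.get_mem L _)
      obtain ⟨i, hi⟩ := hmem j x hj
      obtain ⟨i', hi'⟩ := hmem j' y hj'
      rw [hZsome j i _ hi, hZsome j' i' _ hi']
      by_cases hjj : j = j'
      · subst hjj
        have hsort := (hl j).sorted'
        have hne := rel_of_sorted_chain' (l j) hsort (hl j).2.2 x y hj hj' hxy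
          (fun z hz hxz => hbetween z ((hLmem z).mpr ⟨j, hz⟩) hxz)
        rw [hVsome j i _ hi, hVsome j i' _ hi'] at hne
        have hii : i ≠ i' := by simpa using hne
        simp [hii]
      · simp [hjj]
  calc ∑ j : Fin r, altVec n σ (vecOfTuple n fun i => Y j i)
      = ∑ j : Fin r, (l j).length :=
        Finset.sum_congr rfl fun j _ => (hlen j).symm
    _ = L.length := hLlen.symm
    _ ≤ _ := le_altVec hLalt
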